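/- arXiv:math/0612536 — 4 statements merged into one kernel-verified Lean document; each statement's English description precedes it below -/
import Mathlib

section
/- Suppose B : [k₀, ∞) → ℝ is nonnegative and nonincreasing, and there exist constants C > 0, k₀ > 0, and γ > 1 such that (h − k)·B(h) ≤ C·k·(B(k))^γ for all h, k with k₀ ≤ k < h. Then there exists K < ∞ (depending only on C, γ, k₀, and B(k₀)) such that B(K) = 0. -/
set_option maxHeartbeats 1000000


/-- Stampacchia-type lemma: if `B` is nonnegative and nonincreasing
on `[k₀, ∞)` and `(h - k) * B h ≤ C * k * (B k) ^ γ` for all `k₀ ≤ k < h`, with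
`C > 0`, `k₀ > 0`, `γ > 1`, then `B K = 0` for some finite `K`. -/
theorem stmt_1 (B : ℝ → ℝ) (C k₀ γ : ℝ) (hC : 0 < C) (hk₀ : 0 < k₀) (hγ : 1 < γ)
    (hBnonneg : ∀ t, k₀ ≤ t → 0 ≤ B t)
    (hBmono : ∀ s t, k₀ ≤ s → s ≤ t → B t ≤ B s)
    (hiter : ∀ h k, k₀ ≤ k → k < h → (h - k) * B h ≤ C * k * B k ^ γ) :
    ∃ K : ℝ, k₀ ≤ K ∧ B K = 0 := by
  have h2 : (0:ℝ) < 2 := two_pos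
  set p : ℝ := γ - 1 with hpdef
  have hp : 0 < p := by simp only [hpdef]; linarith
  have hγp : γ = p + 1 := by simp [hpdef]
  set b₀ : ℝ := B k₀ with hb₀
  have hb₀0 : 0 ≤ b₀ := hBnonneg k₀ le_rfl
  set A : ℝ := 4 * C * (2:ℝ) ^ (1/p) with hA
  have hApos : 0 < A := by
    have : (0:ℝ) < (2:ℝ) ^ (1/p) := Real.rpow_pos_of_pos h2 _
    positivity
  set ε : ℝ := A ^ (-(1/p)) with hε
  have hεpos : 0 < ε := Real.rpow_pos_of_pos hApos _
  have hεp : A * ε ^ p = 1 := by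
    rw [hε, ← Real.rpow_mul hApos.le]
    rw [show -(1/p) * p = -1 by field_simp]
    rw [Real.rpow_neg_one]
    exact mul_inv_cancel₀ hApos.ne'
  set k₁ : ℝ := k₀ + 1 + C * k₀ * b₀ ^ γ / ε with hk₁def
  have hQ0 : 0 ≤ C * k₀ * b₀ ^ γ := by
    have := Real.rpow_nonneg hb₀0 γ
    positivity
  have hk₁ : k₀ < k₁ := by
    have : 0 ≤ C * k₀ * b₀ ^ γ / ε := by positivity
    simp only [hk₁def]; linarith
  have hBk₁ : B k₁ ≤ ε := by
    have h1 := hiter k₁ k₀ le_rfl hk₁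
    have hdd : k₁ - k₀ = 1 + C * k₀ * b₀ ^ γ / ε := by
      simp only [hk₁def]; ring
    have hd0 : 0 < k₁ - k₀ := by linarith
    rw [← hb₀] at h1
    have h3 : C * k₀ * b₀ ^ γ ≤ ε * (k₁ - k₀) := by
      rw [hdd]
      have he : ε * (1 + C * k₀ * b₀ ^ γ / ε) = ε + C * k₀ * b₀ ^ γ := by
        field_simp
      rw [he]; linarith
    have h4 := h1.trans h3
    nlinarith
  set M : ℝ := B k₁ with hM
  have hM0 : 0 ≤ M := hBnonneg k₁ hk₁.le
  rcases eq_or_lt_of_le hM0 with hMz | hMpos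
  · exact ⟨k₁, hk₁.le, hMz.symm⟩
  set d : ℝ := A * k₁ * M ^ p with hd
  have hk₁pos : 0 < k₁ := lt_trans hk₀ hk₁
  have hMp : 0 < M ^ p := Real.rpow_pos_of_pos hMpos p
  have hdpos : 0 < d := by positivity
  have hdk : d ≤ k₁ := by
    have hMε : M ^ p ≤ ε ^ p := Real.rpow_le_rpow hM0 hBk₁ hp.le
    calc d = (A * M ^ p) * k₁ := by rw [hd]; ring
    _ ≤ (A * ε ^ p) * k₁ := by nlinarith
    _ = k₁ := by rw [hεp, one_mul]
  set a : ℝ := -(1/p) with ha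
  set r : ℝ := (2:ℝ) ^ a with hr
  have hr0 : 0 < r := Real.rpow_pos_of_pos h2 _
  have haneg : a < 0 := by rw [ha]; simp; positivity
  have hr1 : r < 1 := Real.rpow_lt_one_of_one_lt_of_neg one_lt_two haneg
  -- powers of two as rpow
  have hpow : ∀ x y : ℝ, (2:ℝ) ^ x * (2:ℝ) ^ y = 2 ^ (x + y) :=
    fun x y => (Real.rpow_add h2 x y).symm
  have l1 : ∀ n : ℕ, r ^ n = (2:ℝ) ^ (a * n) := by
    intro n
    rw [hr, Real.rpow_mul h2.le, Real.rpow_natCast]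
  have l3 : ∀ n : ℕ, ((2:ℝ)⁻¹) ^ n = (2:ℝ) ^ ((-1 : ℝ) * n) := by
    intro n
    rw [Real.rpow_mul h2.le, Real.rpow_natCast, Real.rpow_neg_one]
  -- the iteration sequence
  set K : ℕ → ℝ := fun s => k₁ + d * (1 - (2⁻¹ : ℝ) ^ s) with hK
  have hKge : ∀ s, k₁ ≤ K s := by
    intro s
    have h1 : ((2:ℝ)⁻¹) ^ s ≤ 1 := by
      apply pow_le_one₀ <;> norm_num
    have : 0 ≤ d * (1 - (2⁻¹:ℝ) ^ s) := by
      apply mul_nonneg hdpos.le; linarith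
    simp only [hK]; linarith
  have hKle : ∀ s, K s ≤ k₁ + d := by
    intro s
    have h1 : (0:ℝ) < ((2:ℝ)⁻¹) ^ s := by positivity
    have : d * (1 - (2⁻¹:ℝ) ^ s) ≤ d := by nlinarith
    simp only [hK]; linarith
  have hKlt : ∀ s : ℕ, K s < K (s + 1) := by
    intro s
    have h1 : ((2:ℝ)⁻¹) ^ (s+1) < (2⁻¹:ℝ) ^ s := by
      apply pow_lt_pow_right_of_lt_one₀ <;> norm_num
    simp only [hK]
    have : d * (1 - (2⁻¹:ℝ) ^ s) < d * (1 - (2⁻¹:ℝ) ^ (s+1)) := by nlinarith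
    linarith
  have hKdiff : ∀ s : ℕ, K (s+1) - K s = d * (2⁻¹:ℝ) ^ (s+1) := by
    intro s
    simp only [hK]
    rw [pow_succ]
    ring
  -- main induction
  have main : ∀ s : ℕ, B (K s) ≤ M * r ^ s := by
    intro s
    induction s with
    | zero =>
      have : K 0 = k₁ := by simp [hK]
      rw [this]; simp [hM]
    | succ s ih =>
      have hKs0 : k₀ ≤ K s := le_trans hk₁.le (hKge s)
      have hit := hiter (K (s+1)) (K s) hKs0 (hKlt s)
      rw [hKdiff s] at hit
      have hrs : (0:ℝ) < r ^ s := pow_pos hr0 s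
      have hBKs : 0 ≤ B (K s) := hBnonneg _ hKs0
      have hstep1 : B (K s) ^ γ ≤ (M * r ^ s) ^ γ :=
        Real.rpow_le_rpow hBKs ih (by linarith)
      have hKs2 : K s ≤ 2 * k₁ := le_trans (hKle s) (by linarith)
      have hstep2 : C * K s * B (K s) ^ γ ≤ C * (2 * k₁) * (M * r ^ s) ^ γ := by
        have h0 : 0 ≤ B (K s) ^ γ := Real.rpow_nonneg hBKs γ
        have h1 : C * K s * B (K s) ^ γ ≤ C * (2 * k₁) * B (K s) ^ γ :=
          mul_le_mul_of_nonneg_right (mul_le_mul_of_nonneg_left hKs2 hC.le) h0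
        have h2' : C * (2 * k₁) * B (K s) ^ γ ≤ C * (2 * k₁) * (M * r ^ s) ^ γ :=
          mul_le_mul_of_nonneg_left hstep1 (by positivity)
        linarith
    -- the key exact identity
      have h4 : (2:ℝ) ^ (2:ℝ) = 4 := by
        rw [show (2:ℝ) = ((2:ℕ):ℝ) from by norm_num, Real.rpow_natCast]
        norm_num
      have e1 : (2:ℝ) ^ ((1:ℝ) + a * (s:ℝ) * (p+1))
          = 2 ^ ((2:ℝ) + 1/p + (-1:ℝ) * ((s+1 : ℕ):ℝ) + a * ((s+1 : ℕ):ℝ)) := by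
        congr 1
        rw [ha]
        push_cast
        field_simp
        ring
      have key : C * (2 * k₁) * (M * r ^ s) ^ γ
          = d * (2⁻¹:ℝ) ^ (s+1) * (M * r ^ (s+1)) := by
        rw [Real.mul_rpow hM0 hrs.le, l1 s, l1 (s+1), l3 (s+1),
          ← Real.rpow_mul h2.le, hγp, Real.rpow_add hMpos p 1, Real.rpow_one,
          hd, hA]
        calc C * (2 * k₁) * (M ^ p * M * (2:ℝ) ^ (a * (s:ℝ) * (p+1)))
            = C * k₁ * M ^ p * M * ((2:ℝ) ^ (1:ℝ) * 2 ^ (a * (s:ℝ) * (p+1))) := by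
              rw [Real.rpow_one]; ring
          _ = C * k₁ * M ^ p * M * (2:ℝ) ^ ((1:ℝ) + a * (s:ℝ) * (p+1)) := by
              rw [hpow]
          _ = C * k₁ * M ^ p * M * (2:ℝ) ^ ((2:ℝ) + 1/p + (-1:ℝ) * ((s+1 : ℕ):ℝ) + a * ((s+1 : ℕ):ℝ)) := by
              rw [e1]
          _ = C * k₁ * M ^ p * M * ((2:ℝ) ^ (2:ℝ) * 2 ^ (1/p) * 2 ^ ((-1:ℝ) * ((s+1 : ℕ):ℝ)) * 2 ^ (a * ((s+1 : ℕ):ℝ))) := by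
              rw [hpow, hpow, hpow]
          _ = 4 * C * (2:ℝ) ^ (1/p) * k₁ * M ^ p * (2:ℝ) ^ ((-1:ℝ) * ((s+1 : ℕ):ℝ)) * (M * (2:ℝ) ^ (a * ((s+1 : ℕ):ℝ))) := by
              rw [h4]; ring
      have hfin : d * (2⁻¹:ℝ) ^ (s+1) * B (K (s+1)) ≤ d * (2⁻¹:ℝ) ^ (s+1) * (M * r ^ (s+1)) := by
        calc d * (2⁻¹:ℝ) ^ (s+1) * B (K (s+1)) ≤ C * K s * B (K s) ^ γ := hit
        _ ≤ C * (2 * k₁) * (M * r ^ s) ^ γ := hstep2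
        _ = d * (2⁻¹:ℝ) ^ (s+1) * (M * r ^ (s+1)) := key
      have hdp : (0:ℝ) < d * (2⁻¹:ℝ) ^ (s+1) :=
        mul_pos hdpos (pow_pos (by norm_num) _)
      exact le_of_mul_le_mul_left hfin hdp
  -- conclusion
  refine ⟨k₁ + d, by linarith, ?_⟩
  have hub : ∀ s : ℕ, B (k₁ + d) ≤ M * r ^ s := by
    intro s
    exact le_trans (hBmono (K s) (k₁ + d) (le_trans hk₁.le (hKge s)) (hKle s)) (main s)
  have hlim : Filter.Tendsto (fun s : ℕ => M * r ^ s) Filter.atTop (nhds 0) := by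
    have h := tendsto_pow_atTop_nhds_zero_of_lt_one hr0.le hr1
    simpa using h.const_mul M
  have hle0 : B (k₁ + d) ≤ 0 := ge_of_tendsto' hlim hub
  exact le_antisymm hle0 (hBnonneg _ (by linarith))
end

section
/- Suppose B : [k₀, ∞) → ℝ is nonnegative and nonincreasing, and there exist constants C > 0, k₀ > 0, and γ > 1 such that (h − k)·B(h) ≤ C·h·(B(k))^γ for all h, k with k₀ ≤ k < h. If in addition C·(B(k₀))^{γ−1} < 1, then there exists K < ∞ such that B(K) = 0. -/
set_option maxHeartbeats 1600000 in
/-- Stampacchia-type lemma, second variant: if `B` is nonnegative and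
nonincreasing on `[k₀, ∞)` and `(h - k) * B h ≤ C * h * (B k) ^ γ` for all
`k₀ ≤ k < h`, with `C > 0`, `k₀ > 0`, `γ > 1`, and moreover
`C * (B k₀) ^ (γ - 1) < 1`, then `B K = 0` for some finite `K`. -/
theorem stmt_2 (B : ℝ → ℝ) (C k₀ γ : ℝ) (hC : 0 < C) (hk₀ : 0 < k₀) (hγ : 1 < γ)
    (hBnonneg : ∀ t, k₀ ≤ t → 0 ≤ B t)
    (hBmono : ∀ s t, k₀ ≤ s → s ≤ t → B t ≤ B s)
    (hiter : ∀ h k, k₀ ≤ k → k < h → (h - k) * B h ≤ C * h * B k ^ γ)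
    (hsmall : C * B k₀ ^ (γ - 1) < 1) :
    ∃ K : ℝ, k₀ ≤ K ∧ B K = 0 := by
  have hγ0 : (0:ℝ) < γ - 1 := by linarith
  set b₀ := B k₀ with hb₀def
  clear_value b₀
  have hb₀nonneg : 0 ≤ b₀ := by rw [hb₀def]; exact hBnonneg k₀ le_rfl
  rcases eq_or_lt_of_le hb₀nonneg with h0 | hb₀pos
  · rw [hb₀def] at h0; exact ⟨k₀, le_rfl, h0.symm⟩
  -- splitting lemma for rpow
  have hsplit : ∀ x : ℝ, 0 ≤ x → x ^ γ = x ^ (γ - 1) * x := by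
    intro x hx
    rcases eq_or_lt_of_le hx with h | h
    · rw [← h, Real.zero_rpow (by linarith), Real.zero_rpow (by linarith), mul_zero]
    · have h1 : x ^ (γ - 1 + 1) = x ^ (γ - 1) * x := by
        rw [Real.rpow_add h, Real.rpow_one]
      have h2 : γ - 1 + 1 = γ := by ring
      rw [h2] at h1
      exact h1
  -- Stage 1: geometric decay
  set q₀ := C * b₀ ^ (γ - 1) with hq₀def
  clear_value q₀
  have hq₀pos : 0 < q₀ := by rw [hq₀def]; exact mul_pos hC (Real.rpow_pos_of_pos hb₀pos _)
  have hq₀lt : q₀ < 1 := hsmall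
  set q := (1 + q₀) / 2 with hqdef
  clear_value q
  have hqpos : 0 < q := by rw [hqdef]; linarith
  have hq1 : q < 1 := by rw [hqdef]; linarith
  have hqq₀ : q₀ < q := by rw [hqdef]; linarith
  set lam := q / (q - q₀) with hlamdef
  clear_value lam
  have hden : 0 < q - q₀ := by linarith
  have hlam1 : 1 < lam := by
    rw [hlamdef, lt_div_iff₀ hden]; linarith
  have hlam_eq : lam * q₀ = (lam - 1) * q := by
    rw [hlamdef]; field_simp; ring
  have key1 : ∀ k, k₀ ≤ k → B (lam * k) ≤ q * B k := by
    intro k hk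
    have hkpos : 0 < k := lt_of_lt_of_le hk₀ hk
    have hlt : k < lam * k := by nlinarith
    have h1 := hiter (lam * k) k hk hlt
    have hBk : 0 ≤ B k := hBnonneg k hk
    have hBk' : B k ≤ b₀ := by rw [hb₀def]; exact hBmono k₀ k le_rfl hk
    have h2 : B k ^ (γ - 1) ≤ b₀ ^ (γ - 1) :=
      Real.rpow_le_rpow hBk hBk' hγ0.le
    have h3 : B k ^ γ = B k ^ (γ - 1) * B k := hsplit _ hBk
    rw [h3] at h1
    have h4 : C * (lam * k) * (B k ^ (γ - 1) * B k) ≤ (lam - 1) * k * (q * B k) := by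
      have hcoef : 0 ≤ C * (lam * k) * B k := by positivity
      have := mul_le_mul_of_nonneg_left h2 hcoef
      calc C * (lam * k) * (B k ^ (γ - 1) * B k)
          = C * (lam * k) * B k * B k ^ (γ - 1) := by ring
        _ ≤ C * (lam * k) * B k * b₀ ^ (γ - 1) := this
        _ = (lam * q₀) * (k * B k) := by rw [hq₀def]; ring
        _ = ((lam - 1) * q) * (k * B k) := by rw [hlam_eq]
        _ = (lam - 1) * k * (q * B k) := by ring
    have h5 : (lam - 1) * k * B (lam * k) ≤ (lam - 1) * k * (q * B k) := by
      calc (lam - 1) * k * B (lam * k) = (lam * k - k) * B (lam * k) := by ring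
        _ ≤ C * (lam * k) * (B k ^ (γ - 1) * B k) := h1
        _ ≤ (lam - 1) * k * (q * B k) := h4
    have hpos : 0 < (lam - 1) * k := by nlinarith
    exact le_of_mul_le_mul_left (by linarith [h5]) hpos
  have key2 : ∀ n : ℕ, B (lam ^ n * k₀) ≤ q ^ n * b₀ := by
    intro n
    induction n with
    | zero => simp [hb₀def]
    | succ n ih =>
      have hk : k₀ ≤ lam ^ n * k₀ := by
        nlinarith [one_le_pow₀ (a := lam) hlam1.le (n := n)]
      have harg : lam ^ (n + 1) * k₀ = lam * (lam ^ n * k₀) := by ring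
      calc B (lam ^ (n + 1) * k₀) = B (lam * (lam ^ n * k₀)) := by rw [harg]
        _ ≤ q * B (lam ^ n * k₀) := key1 _ hk
        _ ≤ q * (q ^ n * b₀) := by nlinarith
        _ = q ^ (n + 1) * b₀ := by ring
  -- Stage 2 setup
  set μ := 1 / (γ - 1) with hμdef
  clear_value μ
  have hμpos : 0 < μ := by rw [hμdef]; positivity
  set s := (1/2 : ℝ) ^ μ with hsdef
  clear_value s
  have hs0 : 0 < s := by rw [hsdef]; exact Real.rpow_pos_of_pos (by norm_num) μ
  have hs1 : s < 1 := by rw [hsdef]; exact Real.rpow_lt_one (by norm_num) (by norm_num) hμpos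
  have hsγ : s ^ γ = s * (1/2) := by
    rw [hsdef, ← Real.rpow_mul (by norm_num : (0:ℝ) ≤ 1/2)]
    have : μ * γ = μ + 1 := by rw [hμdef]; field_simp; ring
    rw [this, Real.rpow_add (by norm_num : (0:ℝ) < 1/2), Real.rpow_one]
  set ε := s / (4 * C) with hεdef
  clear_value ε
  have hεpos : 0 < ε := by rw [hεdef]; positivity
  set δ := ε ^ μ with hδdef
  clear_value δ
  have hδpos : 0 < δ := by rw [hδdef]; exact Real.rpow_pos_of_pos hεpos μ
  have hδpow : δ ^ (γ - 1) = ε := by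
    rw [hδdef, ← Real.rpow_mul hεpos.le]
    have : μ * (γ - 1) = 1 := by rw [hμdef]; field_simp
    rw [this, Real.rpow_one]
  -- choose N with q^N * b₀ < δ
  obtain ⟨N, hN⟩ := exists_pow_lt_of_lt_one (show 0 < δ / b₀ by positivity) hq1
  have hNlt : q ^ N * b₀ < δ := by
    rw [div_eq_inv_mul] at hN
    calc q ^ N * b₀ < δ / b₀ * b₀ := by
          apply mul_lt_mul_of_pos_right _ hb₀pos
          rw [div_eq_inv_mul]; exact hN
      _ = δ := by field_simp
  set k₁ := lam ^ N * k₀ with hk₁def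
  clear_value k₁
  have hk₁ : k₀ ≤ k₁ := by
    rw [hk₁def]
    nlinarith [one_le_pow₀ (a := lam) hlam1.le (n := N)]
  have hk₁pos : 0 < k₁ := lt_of_lt_of_le hk₀ hk₁
  set b₁ := B k₁ with hb₁def
  clear_value b₁
  have hb₁nonneg : 0 ≤ b₁ := by rw [hb₁def]; exact hBnonneg _ hk₁
  have hb₁lt : b₁ < δ := by rw [hb₁def, hk₁def]; exact lt_of_le_of_lt (key2 N) hNlt
  have hb₁pow : b₁ ^ (γ - 1) ≤ ε := by
    rw [← hδpow]
    exact Real.rpow_le_rpow hb₁nonneg hb₁lt.le hγ0.le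
  rcases eq_or_lt_of_le hb₁nonneg with h0 | hb₁pos
  · rw [hb₁def] at h0; exact ⟨k₁, hk₁, h0.symm⟩
  set d := 2 * (2 * C * k₁) * b₁ ^ (γ - 1) / s with hddef
  clear_value d
  have hb₁powpos : 0 < b₁ ^ (γ - 1) := Real.rpow_pos_of_pos hb₁pos _
  have hdpos : 0 < d := by rw [hddef]; positivity
  have hdle : d ≤ k₁ := by
    rw [hddef, div_le_iff₀ hs0]
    have h1 : b₁ ^ (γ - 1) ≤ s / (4 * C) := by rw [← hεdef]; exact hb₁pow
    have h2 : 4 * C * b₁ ^ (γ - 1) ≤ s := by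
      calc 4 * C * b₁ ^ (γ - 1) ≤ 4 * C * (s / (4 * C)) :=
            mul_le_mul_of_nonneg_left h1 (by positivity)
        _ = s := by field_simp
    calc 2 * (2 * C * k₁) * b₁ ^ (γ - 1) = k₁ * (4 * C * b₁ ^ (γ - 1)) := by ring
      _ ≤ k₁ * s := mul_le_mul_of_nonneg_left h2 hk₁pos.le
  set c : ℕ → ℝ := fun n => k₁ + d * (1 - (1/2:ℝ) ^ n) with hcdef
  clear_value c
  have hcge : ∀ n, k₁ ≤ c n := by
    intro n
    have h1 : (1/2:ℝ) ^ n ≤ 1 := pow_le_one₀ (by norm_num) (by norm_num)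
    have h2 : 0 ≤ d * (1 - (1/2:ℝ) ^ n) := mul_nonneg hdpos.le (by linarith)
    simp only [hcdef]; linarith
  have hcle : ∀ n, c n ≤ k₁ + d := by
    intro n
    have h1 : (0:ℝ) ≤ (1/2:ℝ) ^ n := by positivity
    have h2 : d * (1 - (1/2:ℝ) ^ n) = d - d * (1/2:ℝ) ^ n := by ring
    have h3 : 0 ≤ d * (1/2:ℝ) ^ n := mul_nonneg hdpos.le h1
    simp only [hcdef]; linarith
  have key3 : ∀ n : ℕ, B (c n) ≤ b₁ * s ^ n := by
    intro n
    induction n with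
    | zero => simp [hcdef, hb₁def]
    | succ n ih =>
      have hgap : c (n + 1) - c n = d * (1/2:ℝ) ^ (n + 1) := by
        simp only [hcdef]
        rw [pow_succ]; ring
      have hgappos : 0 < d * (1/2:ℝ) ^ (n + 1) := by positivity
      have hcn : k₀ ≤ c n := le_trans hk₁ (hcge n)
      have hlt : c n < c (n + 1) := by linarith [hgap, hgappos]
      have h1 := hiter (c (n + 1)) (c n) hcn hlt
      have hBcn : 0 ≤ B (c n) := hBnonneg _ hcn
      have hrhs : 0 ≤ b₁ * s ^ n := by positivity
      have h2 : B (c n) ^ γ ≤ (b₁ * s ^ n) ^ γ :=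
        Real.rpow_le_rpow hBcn ih (by linarith)
      have h3 : (b₁ * s ^ n) ^ γ = b₁ ^ (γ - 1) * b₁ * (s * (1/2)) ^ n := by
        rw [Real.mul_rpow hb₁nonneg (by positivity), hsplit b₁ hb₁nonneg]
        congr 1
        rw [← Real.rpow_natCast s n, ← Real.rpow_mul hs0.le, mul_comm (n:ℝ) γ,
          Real.rpow_mul hs0.le, hsγ, Real.rpow_natCast]
      have hcn1le : c (n + 1) ≤ 2 * k₁ := by linarith [hcle (n + 1)]
      have hcn1pos : 0 < c (n + 1) := lt_of_lt_of_le hk₁pos (hcge (n + 1))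
      have hBcn1 : 0 ≤ B (c (n + 1)) := hBnonneg _ (le_trans hk₁ (hcge (n + 1)))
      have hBγpos : 0 ≤ B (c n) ^ γ := Real.rpow_nonneg hBcn γ
      have h4 : C * c (n + 1) * B (c n) ^ γ ≤ 2 * C * k₁ * ((b₁ * s ^ n) ^ γ) := by
        have ha : C * c (n + 1) ≤ 2 * C * k₁ := by
          have := mul_le_mul_of_nonneg_left hcn1le hC.le
          linarith
        have hb : C * c (n + 1) * B (c n) ^ γ ≤ 2 * C * k₁ * B (c n) ^ γ :=
          mul_le_mul_of_nonneg_right ha hBγpos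
        have hc2 : 2 * C * k₁ * B (c n) ^ γ ≤ 2 * C * k₁ * ((b₁ * s ^ n) ^ γ) := by
          apply mul_le_mul_of_nonneg_left h2 (by positivity)
        linarith
      have hdd : 2 * C * k₁ * b₁ ^ (γ - 1) = d * s / 2 := by
        rw [hddef]; field_simp
      have h5 : 2 * C * k₁ * ((b₁ * s ^ n) ^ γ)
          = d * (1/2:ℝ) ^ (n + 1) * (b₁ * s ^ (n + 1)) := by
        rw [h3, mul_pow, pow_succ s, pow_succ (1/2:ℝ)]
        linear_combination (b₁ * s ^ n * (1/2:ℝ) ^ n) * hdd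
      have h6 : d * (1/2:ℝ) ^ (n + 1) * B (c (n + 1))
          ≤ d * (1/2:ℝ) ^ (n + 1) * (b₁ * s ^ (n + 1)) := by
        calc d * (1/2:ℝ) ^ (n + 1) * B (c (n + 1))
            = (c (n + 1) - c n) * B (c (n + 1)) := by rw [hgap]
          _ ≤ C * c (n + 1) * B (c n) ^ γ := h1
          _ ≤ 2 * C * k₁ * ((b₁ * s ^ n) ^ γ) := h4
          _ = d * (1/2:ℝ) ^ (n + 1) * (b₁ * s ^ (n + 1)) := h5
      exact le_of_mul_le_mul_left (by linarith [h6]) hgappos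
  -- Conclusion
  refine ⟨k₁ + d, le_trans hk₁ (by linarith), ?_⟩
  have hBK : 0 ≤ B (k₁ + d) := hBnonneg _ (le_trans hk₁ (by linarith))
  by_contra hne
  have hBKpos : 0 < B (k₁ + d) := lt_of_le_of_ne hBK (Ne.symm hne)
  obtain ⟨M, hM⟩ := exists_pow_lt_of_lt_one
    (show 0 < B (k₁ + d) / b₁ by positivity) hs1
  have h7 : B (k₁ + d) ≤ B (c M) :=
    hBmono (c M) (k₁ + d) (le_trans hk₁ (hcge M)) (hcle M)
  have h8 : b₁ * s ^ M < B (k₁ + d) := by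
    rw [div_eq_inv_mul] at hM
    calc b₁ * s ^ M < b₁ * ((b₁)⁻¹ * B (k₁ + d)) :=
          mul_lt_mul_of_pos_left hM hb₁pos
      _ = B (k₁ + d) := by field_simp
  linarith [key3 M]
end

section
/- For v ∈ L¹_loc(Ω), the quantity F(v) is finite if and only if v ∈ BV(Ω), i.e. if and only if v ∈ L¹(Ω) and A(v) < ∞. -/
open MeasureTheory
open scoped ENNReal

/-- A family `g = (g₁, …, g_{n+1})` of test vector fields for the weighted area
functional: each `gᵢ` is `C¹` with compact support contained in `Ω`, and
`∑ᵢ gᵢ(x)² ≤ 1` for every `x`. -/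
def Admissible (n : ℕ) (Ω : Set (EuclideanSpace ℝ (Fin n)))
    (g : Fin (n + 1) → EuclideanSpace ℝ (Fin n) → ℝ) : Prop :=
  (∀ i, ContDiff ℝ 1 (g i)) ∧ (∀ i, HasCompactSupport (g i)) ∧
    (∀ i, tsupport (g i) ⊆ Ω) ∧ ∀ x, ∑ i, g i x ^ 2 ≤ 1

/-- `F(v) = ∫_Ω √(v² + |Dv|²)`, defined by duality as a value in `[0, ∞]`. -/
noncomputable def Ffun (n : ℕ) (Ω : Set (EuclideanSpace ℝ (Fin n)))
    (v : EuclideanSpace ℝ (Fin n) → ℝ) : ℝ≥0∞ :=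
  ⨆ g : { g // Admissible n Ω g },
    ENNReal.ofReal (∫ x in Ω, v x * (g.1 (Fin.last n) x +
      ∑ i : Fin n, fderiv ℝ (g.1 i.castSucc) x (EuclideanSpace.single i 1)))

/-- `A(v) = ∫_Ω √(1 + |Dv|²)`, the area functional, defined by duality. -/
noncomputable def Afun (n : ℕ) (Ω : Set (EuclideanSpace ℝ (Fin n)))
    (v : EuclideanSpace ℝ (Fin n) → ℝ) : ℝ≥0∞ :=
  ⨆ g : { g // Admissible n Ω g },
    ENNReal.ofReal (∫ x in Ω, (g.1 (Fin.last n) x +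
      v x * ∑ i : Fin n, fderiv ℝ (g.1 i.castSucc) x (EuclideanSpace.single i 1)))

/-- Test fields for the total variation: `n` components. -/
def AdmissibleT (n : ℕ) (Ω : Set (EuclideanSpace ℝ (Fin n)))
    (g : Fin n → EuclideanSpace ℝ (Fin n) → ℝ) : Prop :=
  (∀ i, ContDiff ℝ 1 (g i)) ∧ (∀ i, HasCompactSupport (g i)) ∧
    (∀ i, tsupport (g i) ⊆ Ω) ∧ ∀ x, ∑ i, g i x ^ 2 ≤ 1

/-- `T(v) = ∫_Ω |Dv|`, the total variation, defined by duality. -/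
noncomputable def Tfun (n : ℕ) (Ω : Set (EuclideanSpace ℝ (Fin n)))
    (v : EuclideanSpace ℝ (Fin n) → ℝ) : ℝ≥0∞ :=
  ⨆ g : { g // AdmissibleT n Ω g },
    ENNReal.ofReal (∫ x in Ω,
      v x * ∑ i : Fin n, fderiv ℝ (g.1 i) x (EuclideanSpace.single i 1))

namespace Stmt7

open Metric Set Function Filter
open scoped Convolution Topology Pointwise

variable {n : ℕ} {Ω : Set (EuclideanSpace ℝ (Fin n))} {v : EuclideanSpace ℝ (Fin n) → ℝ}

/-- `v·h` is integrable on `Ω` if `h` is continuous with compact support in `Ω`. -/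
lemma integrableOn_mul (hΩo : IsOpen Ω) (hv : LocallyIntegrableOn v Ω)
    {h : EuclideanSpace ℝ (Fin n) → ℝ} (hc : Continuous h) (hcs : HasCompactSupport h)
    (hts : tsupport h ⊆ Ω) : IntegrableOn (fun x => v x * h x) Ω := by
  have hvK : IntegrableOn v (tsupport h) := hv.integrableOn_compact_subset hts hcs
  obtain ⟨C, hC⟩ := hcs.exists_bound_of_continuous hc
  have h1 : IntegrableOn (fun x => v x * h x) (tsupport h) := by
    have := hvK.mul_bdd (hc.aestronglyMeasurable.restrict) (ae_of_all _ hC)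
    exact this
  have h2 : IntegrableOn (fun x => v x * h x) (Ω \ tsupport h) := by
    refine (integrableOn_zero (ε' := ℝ)).congr_fun (fun x hx => ?_)
      (hΩo.measurableSet.diff (isClosed_tsupport h).measurableSet)
    simp [image_eq_zero_of_notMem_tsupport hx.2]
  exact (h1.union h2).mono_set fun x hx => by
    by_cases hxk : x ∈ tsupport h
    · exact Or.inl hxk
    · exact Or.inr ⟨hx, hxk⟩

/-- Partial derivatives of `C¹` compactly supported functions are continuous with
compact support. -/
lemma pd_cont {g : EuclideanSpace ℝ (Fin n) → ℝ} (hg : ContDiff ℝ 1 g)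
    (e : EuclideanSpace ℝ (Fin n)) : Continuous fun x => fderiv ℝ g x e :=
  (hg.continuous_fderiv one_ne_zero).clm_apply continuous_const

lemma pd_support {g : EuclideanSpace ℝ (Fin n) → ℝ}
    (e : EuclideanSpace ℝ (Fin n)) : support (fun x => fderiv ℝ g x e) ⊆ tsupport g := by
  intro x hx
  have : fderiv ℝ g x ≠ 0 := by
    intro h0
    simp [h0] at hx
  exact support_fderiv_subset ℝ this

lemma pd_hcs {g : EuclideanSpace ℝ (Fin n) → ℝ} (hcs : HasCompactSupport g)
    (e : EuclideanSpace ℝ (Fin n)) : HasCompactSupport fun x => fderiv ℝ g x e :=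
  (hcs.fderiv ℝ).mono (fun x hx => by
    have : fderiv ℝ g x ≠ 0 := fun h0 => by simp [h0] at hx
    simpa [Function.mem_support] using this)

lemma pd_tsupport {g : EuclideanSpace ℝ (Fin n) → ℝ} (hts : tsupport g ⊆ Ω)
    (e : EuclideanSpace ℝ (Fin n)) : tsupport (fun x => fderiv ℝ g x e) ⊆ Ω :=
  (closure_minimal (pd_support e) (isClosed_tsupport g)).trans hts

/-- The divergence term is integrable against `v` on `Ω`. -/
lemma integrableOn_mul_div (hΩo : IsOpen Ω) (hv : LocallyIntegrableOn v Ω)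
    {m : ℕ} {g : Fin m → EuclideanSpace ℝ (Fin n) → ℝ}
    (hg1 : ∀ i, ContDiff ℝ 1 (g i)) (hg2 : ∀ i, HasCompactSupport (g i))
    (hg3 : ∀ i, tsupport (g i) ⊆ Ω)
    (e : Fin m → EuclideanSpace ℝ (Fin n)) :
    IntegrableOn (fun x => v x * ∑ i : Fin m, fderiv ℝ (g i) x (e i)) Ω := by
  have : (fun x => v x * ∑ i : Fin m, fderiv ℝ (g i) x (e i))
      = fun x => ∑ i : Fin m, v x * fderiv ℝ (g i) x (e i) :=
    funext fun x => Finset.mul_sum _ _ _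
  rw [this]
  exact integrable_finset_sum _ fun i _ =>
    integrableOn_mul hΩo hv (pd_cont (hg1 i) (e i)) (pd_hcs (hg2 i) (e i))
      (pd_tsupport (hg3 i) (e i))

lemma comp_le_one {m : ℕ} {g : Fin m → EuclideanSpace ℝ (Fin n) → ℝ}
    (hg4 : ∀ x, ∑ i, g i x ^ 2 ≤ 1) (i : Fin m) (x : EuclideanSpace ℝ (Fin n)) :
    |g i x| ≤ 1 := by
  have h1 : g i x ^ 2 ≤ 1 :=
    le_trans (Finset.single_le_sum (f := fun j => g j x ^ 2)
      (fun j _ => sq_nonneg _) (Finset.mem_univ i)) (hg4 x)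
  rw [abs_le]; constructor <;> nlinarith

/-- Any single `C¹` test function `φ` with `|φ| ≤ 1` supported in `Ω` gives a lower
bound for `Ffun` through the zeroth-order term. -/
lemma key_le_Ffun {φ : EuclideanSpace ℝ (Fin n) → ℝ} (hφ1 : ContDiff ℝ 1 φ)
    (hφ2 : HasCompactSupport φ) (hφ3 : tsupport φ ⊆ Ω) (hφ4 : ∀ x, |φ x| ≤ 1) :
    ENNReal.ofReal (∫ x in Ω, v x * φ x) ≤ Ffun n Ω v := by
  classical
  set g : Fin (n + 1) → EuclideanSpace ℝ (Fin n) → ℝ :=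
    fun i => if i = Fin.last n then φ else 0 with hgdef
  have hzero : ∀ i : Fin n, g i.castSucc = 0 :=
    fun i => if_neg (Fin.castSucc_lt_last i).ne
  have hadm : Admissible n Ω g := by
    refine ⟨fun i => ?_, fun i => ?_, fun i => ?_, fun x => ?_⟩
    · by_cases h : i = Fin.last n
      · simpa [g, h] using hφ1
      · simpa [g, h, Pi.zero_def] using (contDiff_zero_fun :
          ContDiff ℝ 1 (0 : EuclideanSpace ℝ (Fin n) → ℝ))
    · by_cases h : i = Fin.last n
      · simpa [g, h] using hφ2
      · simp only [g, if_neg h]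
        exact HasCompactSupport.intro isCompact_empty fun x hx => rfl
    · by_cases h : i = Fin.last n
      · simpa [g, h] using hφ3
      · simp only [g, if_neg h]
        have : tsupport (0 : EuclideanSpace ℝ (Fin n) → ℝ) = ∅ := by
          simp [tsupport]
        simp [this]
    · have : ∑ i, g i x ^ 2 = φ x ^ 2 := by
        rw [Finset.sum_eq_single (Fin.last n)]
        · simp [g]
        · intro b _ hb; simp [g, hb]
        · simp
      rw [this]
      nlinarith [abs_le.mp (hφ4 x)]
  have heq : (∫ x in Ω, v x * φ x)
      = ∫ x in Ω, v x * (g (Fin.last n) x +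
        ∑ i : Fin n, fderiv ℝ (g i.castSucc) x (EuclideanSpace.single i 1)) := by
    refine integral_congr_ae (Eventually.of_forall fun x => ?_)
    have h1 : g (Fin.last n) x = φ x := by simp [g]
    have h2 : ∀ i : Fin n, fderiv ℝ (g i.castSucc) x (EuclideanSpace.single i 1) = 0 := by
      intro i
      rw [hzero i]
      rw [show (0 : EuclideanSpace ℝ (Fin n) → ℝ) = fun _ => (0:ℝ) from rfl, fderiv_fun_const]
      simp
    simp [h1, h2]
  rw [heq]
  exact le_iSup (fun g : {g // Admissible n Ω g} =>
    ENNReal.ofReal (∫ x in Ω, v x * (g.1 (Fin.last n) x +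
      ∑ i : Fin n, fderiv ℝ (g.1 i.castSucc) x (EuclideanSpace.single i 1))))
    (⟨g, hadm⟩ : {g // Admissible n Ω g})

lemma conv_abs_le_one {w : EuclideanSpace ℝ (Fin n) → ℝ} (hb : ∀ x, |w x| ≤ 1)
    (φ : ContDiffBump (0 : EuclideanSpace ℝ (Fin n))) (x : EuclideanSpace ℝ (Fin n)) :
    |(φ.normed volume ⋆[ContinuousLinearMap.lsmul ℝ ℝ, volume] w) x| ≤ 1 := by
  rw [convolution_def]
  calc |∫ t, ContinuousLinearMap.lsmul ℝ ℝ (φ.normed volume t) (w (x - t))|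
      ≤ ∫ t, ‖ContinuousLinearMap.lsmul ℝ ℝ (φ.normed volume t) (w (x - t))‖ := by
        exact (Real.norm_eq_abs _) ▸ norm_integral_le_integral_norm _
    _ ≤ ∫ t, φ.normed volume t := by
        apply integral_mono_of_nonneg (Eventually.of_forall fun t => norm_nonneg _)
          φ.integrable_normed
        refine Eventually.of_forall fun t => ?_
        simp only [ContinuousLinearMap.lsmul_apply, smul_eq_mul, norm_mul, Real.norm_eq_abs,
          abs_of_nonneg (φ.nonneg_normed t)]
        calc φ.normed volume t * |w (x - t)| ≤ φ.normed volume t * 1 :=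
              mul_le_mul_of_nonneg_left (hb _) (φ.nonneg_normed t)
          _ = φ.normed volume t := mul_one _
    _ = 1 := φ.integral_normed

lemma conv_tsupport_subset {w : EuclideanSpace ℝ (Fin n) → ℝ}
    {K : Set (EuclideanSpace ℝ (Fin n))} (hK : IsCompact K) (hsupp : support w ⊆ K)
    (φ : ContDiffBump (0 : EuclideanSpace ℝ (Fin n))) :
    tsupport (φ.normed volume ⋆[ContinuousLinearMap.lsmul ℝ ℝ, volume] w) ⊆
      cthickening φ.rOut K := by
  set B : Set (EuclideanSpace ℝ (Fin n)) := closedBall 0 φ.rOut with hB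
  have h1 : support (φ.normed volume ⋆[ContinuousLinearMap.lsmul ℝ ℝ, volume] w) ⊆ B + K := by
    refine (support_convolution_subset _).trans ?_
    rw [φ.support_normed_eq]
    exact Set.add_subset_add ball_subset_closedBall hsupp
  have h2 : IsClosed (B + K) := ((isCompact_closedBall _ _).add hK).isClosed
  refine (closure_minimal h1 h2).trans ?_
  rintro x ⟨b, hb, k, hk, rfl⟩
  refine mem_cthickening_of_dist_le _ k _ _ hk ?_
  simpa [dist_eq_norm] using mem_closedBall_zero_iff.mp hb

/-- Key estimate: every compact `K ⊆ Ω` satisfies `∫_K |v| ≤ C` if all smooth test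
pairings are bounded by `C`. -/
lemma compact_bound (hΩo : IsOpen Ω) (hv : LocallyIntegrableOn v Ω) (C : ℝ)
    (hC : ∀ φ : EuclideanSpace ℝ (Fin n) → ℝ, ContDiff ℝ 1 φ → HasCompactSupport φ →
      tsupport φ ⊆ Ω → (∀ x, |φ x| ≤ 1) → ∫ x in Ω, v x * φ x ≤ C)
    {K : Set (EuclideanSpace ℝ (Fin n))} (hK : IsCompact K) (hKΩ : K ⊆ Ω) :
    ∫ x in K, |v x| ≤ C := by
  obtain ⟨δ₀, hδ₀, hK'Ω⟩ := hK.exists_cthickening_subset_open hΩo hKΩ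
  set K' : Set (EuclideanSpace ℝ (Fin n)) := cthickening δ₀ K with hK'def
  have hK'c : IsCompact K' := hK.cthickening
  have hvK' : IntegrableOn v K' := hv.integrableOn_compact_subset hK'Ω hK'c
  -- measurable representative of `v` on `Ω`
  set v' := (hv.aestronglyMeasurable).mk v with hv'def
  have hv'sm : StronglyMeasurable v' := (hv.aestronglyMeasurable).stronglyMeasurable_mk
  have hvv' : v =ᵐ[volume.restrict Ω] v' := (hv.aestronglyMeasurable).ae_eq_mk
  -- the "sign" function
  set w : EuclideanSpace ℝ (Fin n) → ℝ :=
    K.indicator (fun x => if 0 ≤ v' x then 1 else -1) with hwdef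
  have hwb : ∀ x, |w x| ≤ 1 := by
    intro x
    by_cases hx : x ∈ K
    · rw [hwdef, Set.indicator_of_mem hx]
      by_cases h0 : 0 ≤ v' x <;> simp [h0]
    · rw [hwdef, Set.indicator_of_notMem hx]; simp
  have hwsupp : support w ⊆ K := Set.support_indicator_subset
  have hwm : Measurable w :=
    (Measurable.ite (measurableSet_le measurable_const hv'sm.measurable)
      measurable_const measurable_const).indicator hK.measurableSet
  have hwint : Integrable w := by
    refine Integrable.mono' ((integrable_indicator_iff hK.measurableSet).2
      (integrableOn_const (C := (1:ℝ)) hK.measure_lt_top.ne))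
      hwm.aestronglyMeasurable (Eventually.of_forall fun x => ?_)
    by_cases hx : x ∈ K
    · rw [Set.indicator_of_mem hx]
      simpa [Real.norm_eq_abs] using hwb x
    · rw [Set.indicator_of_notMem hx]
      have : w x = 0 := by rw [hwdef, Set.indicator_of_notMem hx]
      simp [this]
  -- family of bump functions
  set φs : ℕ → ContDiffBump (0 : EuclideanSpace ℝ (Fin n)) := fun j =>
    ⟨δ₀ / (j + 1) / 2, δ₀ / (j + 1), by positivity, half_lt_self (by positivity)⟩ with hφsdef
  set ψ : ℕ → EuclideanSpace ℝ (Fin n) → ℝ := fun j =>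
    (φs j).normed volume ⋆[ContinuousLinearMap.lsmul ℝ ℝ, volume] w with hψdef
  have hrout : ∀ j : ℕ, (φs j).rOut = δ₀ / (j + 1) := fun j => rfl
  have hroutle : ∀ j : ℕ, (φs j).rOut ≤ δ₀ := by
    intro j
    rw [hrout]
    calc δ₀ / ((j : ℝ) + 1) ≤ δ₀ / 1 := by
          apply div_le_div_of_nonneg_left hδ₀.le one_pos
          exact_mod_cast Nat.succ_le_succ (Nat.zero_le j)
      _ = δ₀ := div_one _
  have hψsupp : ∀ j, tsupport (ψ j) ⊆ K' := fun j =>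
    (conv_tsupport_subset hK hwsupp (φs j)).trans (cthickening_mono (hroutle j) K)
  have hψsmooth : ∀ j, ContDiff ℝ 1 (ψ j) := fun j =>
    (φs j).hasCompactSupport_normed.contDiff_convolution_left _
      (φs j).contDiff_normed hwint.locallyIntegrable
  have hψcs : ∀ j, HasCompactSupport (ψ j) := fun j =>
    HasCompactSupport.of_support_subset_isCompact hK'c
      ((subset_closure).trans (hψsupp j))
  have hψb : ∀ j, ∀ x, |ψ j x| ≤ 1 := fun j => conv_abs_le_one hwb (φs j)
  have hψΩ : ∀ j, tsupport (ψ j) ⊆ Ω := fun j => (hψsupp j).trans hK'Ω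
  have hψC : ∀ j, ∫ x in Ω, v x * ψ j x ≤ C := fun j =>
    hC (ψ j) (hψsmooth j) (hψcs j) (hψΩ j) (hψb j)
  -- a.e. convergence of the mollifications
  have htends : ∀ᵐ x₀, Tendsto (fun j => ψ j x₀) atTop (𝓝 (w x₀)) := by
    apply ContDiffBump.ae_convolution_tendsto_right_of_locallyIntegrable (K := 2)
      ?_ (Eventually.of_forall fun j => ?_) hwint.locallyIntegrable
    · have : (fun j : ℕ => (φs j).rOut) = fun j : ℕ => δ₀ * (1 / (j + 1)) := by
        funext j; rw [hrout]; ring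
      rw [this]
      simpa using tendsto_one_div_add_atTop_nhds_zero_nat.const_mul δ₀
    · rw [hrout]
      show δ₀ / (j + 1) ≤ 2 * (δ₀ / (j + 1) / 2)
      exact le_of_eq (by ring)
  -- dominated convergence
  have hDCT : Tendsto (fun j => ∫ x in Ω, v x * ψ j x) atTop
      (𝓝 (∫ x in Ω, v x * w x)) := by
    refine tendsto_integral_of_dominated_convergence (K'.indicator fun x => ‖v x‖)
      (fun j => hv.aestronglyMeasurable.mul
        ((hψsmooth j).continuous.aestronglyMeasurable.restrict))
      (((integrable_indicator_iff hK'c.measurableSet).2 hvK'.norm).restrict)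
      (fun j => Eventually.of_forall fun x => ?_)
      ((ae_restrict_of_ae htends).mono fun x hx => hx.const_mul (v x))
    by_cases hx : x ∈ K'
    · rw [Set.indicator_of_mem hx]
      calc ‖v x * ψ j x‖ = ‖v x‖ * ‖ψ j x‖ := norm_mul _ _
        _ ≤ ‖v x‖ * 1 := by
            apply mul_le_mul_of_nonneg_left _ (norm_nonneg _)
            simpa [Real.norm_eq_abs] using hψb j x
        _ = ‖v x‖ := mul_one _
    · rw [Set.indicator_of_notMem hx]
      have : ψ j x = 0 := by
        by_contra h0
        exact hx (hψsupp j (subset_closure h0))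
      simp [this]
  have hle : ∫ x in Ω, v x * w x ≤ C := le_of_tendsto hDCT (Eventually.of_forall hψC)
  -- identify the limit integral
  have heq : (fun x => v x * w x) =ᵐ[volume.restrict Ω] K.indicator fun x => |v x| := by
    filter_upwards [hvv'] with x hx
    by_cases hxK : x ∈ K
    · rw [hwdef, Set.indicator_of_mem hxK, Set.indicator_of_mem hxK]
      by_cases h0 : 0 ≤ v' x
      · rw [if_pos h0, mul_one, abs_of_nonneg (hx ▸ h0)]
      · rw [if_neg h0, abs_of_neg (hx ▸ (not_le.mp h0)), mul_neg_one]
    · rw [hwdef, Set.indicator_of_notMem hxK, Set.indicator_of_notMem hxK, mul_zero]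
  rw [integral_congr_ae heq, integral_indicator hK.measurableSet,
    Measure.restrict_restrict hK.measurableSet,
    Set.inter_eq_self_of_subset_left hKΩ] at hle
  exact hle

/-- If all smooth test pairings are bounded by `C`, then `v` is integrable on `Ω`. -/
lemma integrableOn_of_testBound (hΩo : IsOpen Ω) (hΩb : Bornology.IsBounded Ω)
    (hv : LocallyIntegrableOn v Ω) (C : ℝ)
    (hC : ∀ φ : EuclideanSpace ℝ (Fin n) → ℝ, ContDiff ℝ 1 φ → HasCompactSupport φ →
      tsupport φ ⊆ Ω → (∀ x, |φ x| ≤ 1) → ∫ x in Ω, v x * φ x ≤ C) :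
    IntegrableOn v Ω := by
  refine ⟨hv.aestronglyMeasurable, (hasFiniteIntegral_iff_norm v).2 ?_⟩
  set f : EuclideanSpace ℝ (Fin n) → ℝ≥0∞ := fun x => ENNReal.ofReal ‖v x‖ with hfdef
  have hKbound : ∀ K : Set (EuclideanSpace ℝ (Fin n)), IsCompact K → K ⊆ Ω →
      ∫⁻ x in K, f x ≤ ENNReal.ofReal C := by
    intro K hK hKΩ
    have hKint : IntegrableOn v K := hv.integrableOn_compact_subset hKΩ hK
    have h1 : ∫⁻ x in K, f x = ENNReal.ofReal (∫ x in K, ‖v x‖) :=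
      (ofReal_integral_eq_lintegral_ofReal hKint.norm
        (Eventually.of_forall fun x => norm_nonneg _)).symm
    rw [h1]
    apply ENNReal.ofReal_le_ofReal
    calc ∫ x in K, ‖v x‖ = ∫ x in K, |v x| := by simp [Real.norm_eq_abs]
      _ ≤ C := compact_bound hΩo hv C hC hK hKΩ
  by_cases hcompl : Ωᶜ = ∅
  · have hΩeq : Ω = univ := by
      rw [← compl_empty_iff]; exact hcompl
    have hΩc : IsCompact Ω :=
      Metric.isCompact_of_isClosed_isBounded (hΩeq ▸ isClosed_univ) hΩb
    exact lt_of_le_of_lt (hKbound Ω hΩc subset_rfl) ENNReal.ofReal_lt_top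
  · obtain ⟨z, hz⟩ : Ωᶜ.Nonempty := Set.nonempty_iff_ne_empty.2 hcompl
    set Ks : ℕ → Set (EuclideanSpace ℝ (Fin n)) := fun m =>
      {x | 1 / (m + 1) ≤ infDist x Ωᶜ} ∩ closure Ω with hKsdef
    have hclosedΩ : IsCompact (closure Ω) :=
      Metric.isCompact_of_isClosed_isBounded isClosed_closure hΩb.closure
    have hKsc : ∀ m, IsCompact (Ks m) := by
      intro m
      refine hclosedΩ.of_isClosed_subset ?_ Set.inter_subset_right
      exact (isClosed_le continuous_const (continuous_infDist_pt _)).inter isClosed_closure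
    have hKsΩ : ∀ m, Ks m ⊆ Ω := by
      intro m x hx
      by_contra hxΩ
      have h0 : infDist x Ωᶜ = 0 := infDist_zero_of_mem hxΩ
      have h1 : (0:ℝ) < 1 / (m + 1) := by positivity
      have h2 : 1 / ((m:ℝ) + 1) ≤ infDist x Ωᶜ := hx.1
      rw [h0] at h2
      linarith
    have hKsmono : Monotone Ks := by
      intro m m' hmm' x hx
      have h1 : 1 / ((m:ℝ) + 1) ≤ infDist x Ωᶜ := hx.1
      refine ⟨?_, hx.2⟩
      show 1 / ((m':ℝ) + 1) ≤ infDist x Ωᶜ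
      refine le_trans ?_ h1
      apply one_div_le_one_div_of_le (by positivity)
      have : (m : ℝ) ≤ m' := by exact_mod_cast hmm'
      linarith
    have hcover : ∀ x ∈ Ω, ∃ m, x ∈ Ks m := by
      intro x hx
      have hpos : 0 < infDist x Ωᶜ :=
        (hΩo.isClosed_compl.notMem_iff_infDist_pos ⟨z, hz⟩).1 (by simpa using hx)
      obtain ⟨m, hm⟩ := exists_nat_one_div_lt hpos
      exact ⟨m, ⟨hm.le, subset_closure hx⟩⟩
    have hind : Ω.indicator f = fun x => ⨆ m, (Ks m).indicator f x := by
      funext x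
      by_cases hx : x ∈ Ω
      · rw [Set.indicator_of_mem hx]
        apply le_antisymm
        · obtain ⟨m, hm⟩ := hcover x hx
          exact le_iSup_of_le m (by rw [Set.indicator_of_mem hm])
        · refine iSup_le fun m => ?_
          exact Set.indicator_le_self' (fun _ _ => by simp) x
      · rw [Set.indicator_of_notMem hx]
        symm
        refine le_antisymm (iSup_le fun m => ?_) (by simp)
        exact le_of_eq (Set.indicator_of_notMem (fun hmem => hx (hKsΩ m hmem)) f)
    have hmeas : ∀ m, AEMeasurable ((Ks m).indicator f) := by
      intro m
      refine (aemeasurable_indicator_iff (hKsc m).measurableSet).2 ?_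
      have h1 : AEMeasurable f (volume.restrict Ω) :=
        (hv.aestronglyMeasurable.aemeasurable.norm.ennreal_ofReal)
      exact h1.mono_measure (Measure.restrict_mono (hKsΩ m) le_rfl)
    have hmono : ∀ x, Monotone fun m => (Ks m).indicator f x := fun x m m' h =>
      Set.indicator_le_indicator_of_subset (hKsmono h) (fun _ => by simp) x
    calc ∫⁻ x in Ω, f x = ∫⁻ x, Ω.indicator f x := (lintegral_indicator hΩo.measurableSet f).symm
      _ = ∫⁻ x, ⨆ m, (Ks m).indicator f x := by rw [hind]
      _ = ⨆ m, ∫⁻ x, (Ks m).indicator f x :=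
          lintegral_iSup' hmeas (Eventually.of_forall hmono)
      _ ≤ ENNReal.ofReal C := by
          refine iSup_le fun m => ?_
          rw [lintegral_indicator (hKsc m).measurableSet f]
          exact hKbound (Ks m) (hKsc m) (hKsΩ m)
      _ < ⊤ := ENNReal.ofReal_lt_top

lemma intOn_glast (hΩb : Bornology.IsBounded Ω)
    {g : Fin (n + 1) → EuclideanSpace ℝ (Fin n) → ℝ} (hg : Admissible n Ω g) :
    IntegrableOn (fun x => g (Fin.last n) x) Ω :=
  ((hg.1 _).continuous.integrable_of_hasCompactSupport (hg.2.1 _)).integrableOn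

lemma abs_integral_glast_le (hΩb : Bornology.IsBounded Ω)
    {g : Fin (n + 1) → EuclideanSpace ℝ (Fin n) → ℝ} (hg : Admissible n Ω g) :
    |∫ x in Ω, g (Fin.last n) x| ≤ (volume Ω).toReal := by
  have h1 : |∫ x in Ω, g (Fin.last n) x| ≤ ∫ x in Ω, |g (Fin.last n) x| := by
    simpa [Real.norm_eq_abs] using
      norm_integral_le_integral_norm (μ := volume.restrict Ω) fun x => g (Fin.last n) x
  have h2 : ∫ x in Ω, |g (Fin.last n) x| ≤ ∫ x in Ω, (1 : ℝ) := by
    refine integral_mono_of_nonneg (Eventually.of_forall fun x => abs_nonneg _)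
      (integrableOn_const (C := (1:ℝ)) hΩb.measure_lt_top.ne)
      (Eventually.of_forall fun x => comp_le_one hg.2.2.2 _ x)
  have h3 : ∫ x in Ω, (1 : ℝ) = (volume Ω).toReal := by
    simp [setIntegral_const, Measure.real]
  linarith

/-- The divergence part of any admissible family is dominated by `Ffun`. -/
lemma div_le_Ffun {g : Fin (n + 1) → EuclideanSpace ℝ (Fin n) → ℝ}
    (hg : Admissible n Ω g) :
    ENNReal.ofReal (∫ x in Ω, v x *
        ∑ i : Fin n, fderiv ℝ (g i.castSucc) x (EuclideanSpace.single i 1)) ≤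
      Ffun n Ω v := by
  classical
  set g0 : Fin (n + 1) → EuclideanSpace ℝ (Fin n) → ℝ :=
    fun i => if i = Fin.last n then 0 else g i with hg0def
  have hcs : ∀ i : Fin n, g0 i.castSucc = g i.castSucc :=
    fun i => if_neg (Fin.castSucc_lt_last i).ne
  have hadm : Admissible n Ω g0 := by
    refine ⟨fun i => ?_, fun i => ?_, fun i => ?_, fun x => ?_⟩
    · by_cases h : i = Fin.last n
      · simpa [g0, h, Pi.zero_def] using (contDiff_zero_fun :
          ContDiff ℝ 1 (0 : EuclideanSpace ℝ (Fin n) → ℝ))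
      · simpa [g0, h] using hg.1 i
    · by_cases h : i = Fin.last n
      · simp only [g0, if_pos h]
        exact HasCompactSupport.intro isCompact_empty fun x hx => rfl
      · simpa [g0, h] using hg.2.1 i
    · by_cases h : i = Fin.last n
      · simp only [g0, if_pos h]
        have : tsupport (0 : EuclideanSpace ℝ (Fin n) → ℝ) = ∅ := by simp [tsupport]
        simp [this]
      · simpa [g0, h] using hg.2.2.1 i
    · refine le_trans (Finset.sum_le_sum fun i _ => ?_) (hg.2.2.2 x)
      by_cases h : i = Fin.last n
      · simp [g0, h, sq_nonneg]
      · simp [g0, h]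
  have heq : (∫ x in Ω, v x *
        ∑ i : Fin n, fderiv ℝ (g i.castSucc) x (EuclideanSpace.single i 1))
      = ∫ x in Ω, v x * (g0 (Fin.last n) x +
        ∑ i : Fin n, fderiv ℝ (g0 i.castSucc) x (EuclideanSpace.single i 1)) := by
    refine integral_congr_ae (Eventually.of_forall fun x => ?_)
    have h1 : g0 (Fin.last n) x = 0 := by simp [g0]
    have h2 : ∀ i : Fin n, fderiv ℝ (g0 i.castSucc) x (EuclideanSpace.single i 1)
        = fderiv ℝ (g i.castSucc) x (EuclideanSpace.single i 1) := fun i => by rw [hcs i]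
    simp only [h1, zero_add]
    congr 1
    exact (Finset.sum_congr rfl fun i _ => (h2 i)).symm
  rw [heq]
  exact le_iSup (fun g : {g // Admissible n Ω g} =>
    ENNReal.ofReal (∫ x in Ω, v x * (g.1 (Fin.last n) x +
      ∑ i : Fin n, fderiv ℝ (g.1 i.castSucc) x (EuclideanSpace.single i 1))))
    (⟨g0, hadm⟩ : {g // Admissible n Ω g})

lemma Afun_le (hΩo : IsOpen Ω) (hΩb : Bornology.IsBounded Ω)
    (hv : LocallyIntegrableOn v Ω) :
    Afun n Ω v ≤ ENNReal.ofReal (volume Ω).toReal + Ffun n Ω v := by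
  refine iSup_le fun gp => ?_
  obtain ⟨g, hg⟩ := gp
  have hI2 : IntegrableOn (fun x => v x *
      ∑ i : Fin n, fderiv ℝ (g i.castSucc) x (EuclideanSpace.single i 1)) Ω :=
    integrableOn_mul_div hΩo hv (fun i => hg.1 _) (fun i => hg.2.1 _)
      (fun i => hg.2.2.1 _) _
  have hIg : IntegrableOn (fun x => g (Fin.last n) x) Ω := intOn_glast hΩb hg
  have hsplit : (∫ x in Ω, (g (Fin.last n) x + v x *
        ∑ i : Fin n, fderiv ℝ (g i.castSucc) x (EuclideanSpace.single i 1)))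
      = (∫ x in Ω, g (Fin.last n) x) + ∫ x in Ω, v x *
        ∑ i : Fin n, fderiv ℝ (g i.castSucc) x (EuclideanSpace.single i 1) :=
    integral_add hIg hI2
  calc ENNReal.ofReal (∫ x in Ω, (g (Fin.last n) x + v x *
        ∑ i : Fin n, fderiv ℝ (g i.castSucc) x (EuclideanSpace.single i 1)))
      = ENNReal.ofReal ((∫ x in Ω, g (Fin.last n) x) + ∫ x in Ω, v x *
        ∑ i : Fin n, fderiv ℝ (g i.castSucc) x (EuclideanSpace.single i 1)) := by
        rw [hsplit]
    _ ≤ ENNReal.ofReal (∫ x in Ω, g (Fin.last n) x) + ENNReal.ofReal (∫ x in Ω, v x *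
        ∑ i : Fin n, fderiv ℝ (g i.castSucc) x (EuclideanSpace.single i 1)) :=
        ENNReal.ofReal_add_le
    _ ≤ ENNReal.ofReal (volume Ω).toReal + Ffun n Ω v := by
        refine add_le_add (ENNReal.ofReal_le_ofReal ?_) (div_le_Ffun hg)
        exact le_trans (le_abs_self _) (abs_integral_glast_le hΩb hg)

lemma Ffun_le (hΩo : IsOpen Ω) (hΩb : Bornology.IsBounded Ω)
    (hv : LocallyIntegrableOn v Ω) (hL1 : IntegrableOn v Ω) (hA : Afun n Ω v < ⊤) :
    Ffun n Ω v ≤ ENNReal.ofReal ((∫ x in Ω, |v x|) + ((volume Ω).toReal +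
      (Afun n Ω v).toReal)) := by
  refine iSup_le fun gp => ?_
  obtain ⟨g, hg⟩ := gp
  have hI1 : IntegrableOn (fun x => v x * g (Fin.last n) x) Ω :=
    integrableOn_mul hΩo hv (hg.1 _).continuous (hg.2.1 _) (hg.2.2.1 _)
  have hI2 : IntegrableOn (fun x => v x *
      ∑ i : Fin n, fderiv ℝ (g i.castSucc) x (EuclideanSpace.single i 1)) Ω :=
    integrableOn_mul_div hΩo hv (fun i => hg.1 _) (fun i => hg.2.1 _)
      (fun i => hg.2.2.1 _) _
  have hIg : IntegrableOn (fun x => g (Fin.last n) x) Ω := intOn_glast hΩb hg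
  have hsplit : (∫ x in Ω, v x * (g (Fin.last n) x +
        ∑ i : Fin n, fderiv ℝ (g i.castSucc) x (EuclideanSpace.single i 1)))
      = (∫ x in Ω, v x * g (Fin.last n) x) + ∫ x in Ω, v x *
        ∑ i : Fin n, fderiv ℝ (g i.castSucc) x (EuclideanSpace.single i 1) := by
    rw [← integral_add hI1 hI2]
    exact integral_congr_ae (Eventually.of_forall fun x => mul_add _ _ _)
  have hb1 : (∫ x in Ω, v x * g (Fin.last n) x) ≤ ∫ x in Ω, |v x| := by
    refine integral_mono hI1 hL1.abs fun x => ?_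
    calc v x * g (Fin.last n) x ≤ |v x * g (Fin.last n) x| := le_abs_self _
      _ = |v x| * |g (Fin.last n) x| := abs_mul _ _
      _ ≤ |v x| * 1 := mul_le_mul_of_nonneg_left (comp_le_one hg.2.2.2 _ x) (abs_nonneg _)
      _ = |v x| := mul_one _
  have hb2 : (∫ x in Ω, v x *
      ∑ i : Fin n, fderiv ℝ (g i.castSucc) x (EuclideanSpace.single i 1))
      ≤ (volume Ω).toReal + (Afun n Ω v).toReal := by
    have hAg : ENNReal.ofReal ((∫ x in Ω, g (Fin.last n) x) + ∫ x in Ω, v x *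
        ∑ i : Fin n, fderiv ℝ (g i.castSucc) x (EuclideanSpace.single i 1))
        ≤ Afun n Ω v := by
      rw [← integral_add hIg hI2]
      exact le_iSup (fun g : {g // Admissible n Ω g} =>
        ENNReal.ofReal (∫ x in Ω, (g.1 (Fin.last n) x +
          v x * ∑ i : Fin n, fderiv ℝ (g.1 i.castSucc) x (EuclideanSpace.single i 1))))
        (⟨g, hg⟩ : {g // Admissible n Ω g})
    have h1 : (∫ x in Ω, g (Fin.last n) x) + (∫ x in Ω, v x *
        ∑ i : Fin n, fderiv ℝ (g i.castSucc) x (EuclideanSpace.single i 1))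
        ≤ (Afun n Ω v).toReal := (ENNReal.ofReal_le_iff_le_toReal hA.ne).1 hAg
    have h2 : -(volume Ω).toReal ≤ ∫ x in Ω, g (Fin.last n) x := by
      have := abs_integral_glast_le hΩb hg
      have h3 := neg_abs_le (∫ x in Ω, g (Fin.last n) x)
      linarith
    linarith
  refine ENNReal.ofReal_le_ofReal ?_
  rw [hsplit]
  linarith

end Stmt7

/-- for `v ∈ L¹_loc(Ω)`, `F(v)` is finite iff `v ∈ BV(Ω)`,
i.e. iff `v ∈ L¹(Ω)` and `A(v) < ∞`. -/
theorem stmt_7 (n : ℕ) (Ω : Set (EuclideanSpace ℝ (Fin n)))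
    (hΩo : IsOpen Ω) (hΩb : Bornology.IsBounded Ω)
    (v : EuclideanSpace ℝ (Fin n) → ℝ) (hv : LocallyIntegrableOn v Ω) :
    Ffun n Ω v < ⊤ ↔ IntegrableOn v Ω ∧ Afun n Ω v < ⊤ := by
  constructor
  · intro hF
    have hL1 : IntegrableOn v Ω :=
      Stmt7.integrableOn_of_testBound hΩo hΩb hv (Ffun n Ω v).toReal
        fun φ h1 h2 h3 h4 => (ENNReal.ofReal_le_iff_le_toReal hF.ne).1
          (Stmt7.key_le_Ffun h1 h2 h3 h4)
    refine ⟨hL1, lt_of_le_of_lt (Stmt7.Afun_le hΩo hΩb hv) ?_⟩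
    exact ENNReal.add_lt_top.2 ⟨ENNReal.ofReal_lt_top, hF⟩
  · rintro ⟨hL1, hA⟩
    exact lt_of_le_of_lt (Stmt7.Ffun_le hΩo hΩb hv hL1 hA) ENNReal.ofReal_lt_top
end

section
/- Let B ⊂ ℝⁿ be open, let u ∈ C²(B), and set w := e^{−u} (so w is a positive C² function on B). Then at every point x ∈ B, the equation div(Dw/√(w²+|Dw|²)) = w/√(w²+|Dw|²) + ln w holds at x if and only if the equation div(Du/√(1+|Du|²)) = −1/√(1+|Du|²) + u holds at x. -/
open scoped RealInnerProductSpace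

/-- The divergence of a vector field `X` on `ℝⁿ`, as the trace of its derivative. -/
noncomputable def vdiv (n : ℕ)
    (X : EuclideanSpace ℝ (Fin n) → EuclideanSpace ℝ (Fin n))
    (x : EuclideanSpace ℝ (Fin n)) : ℝ :=
  LinearMap.trace ℝ (EuclideanSpace ℝ (Fin n)) (fderiv ℝ X x)

/-- The mean curvature operator `M u = div (Du / √(1 + |Du|²))`. -/
noncomputable def meanCurv (n : ℕ) (u : EuclideanSpace ℝ (Fin n) → ℝ)
    (x : EuclideanSpace ℝ (Fin n)) : ℝ :=
  vdiv n (fun y => (Real.sqrt (1 + ‖gradient u y‖ ^ 2))⁻¹ • gradient u y) x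

section aux

variable {n : ℕ}

/-- gradient of `exp (-u)` in terms of gradient of `u`, everywhere (junk values agree). -/
lemma grad_exp_neg (u : EuclideanSpace ℝ (Fin n) → ℝ) (y : EuclideanSpace ℝ (Fin n)) :
    gradient (fun z => Real.exp (-u z)) y
      = (-Real.exp (-u y)) • gradient u y := by
  by_cases h : DifferentiableAt ℝ u y
  · have h1 : HasFDerivAt (fun z => Real.exp (-u z))
        (Real.exp (-u y) • -(fderiv ℝ u y)) y := (h.hasFDerivAt.neg).exp
    have h2 : fderiv ℝ (fun z => Real.exp (-u z)) y
        = (-Real.exp (-u y)) • fderiv ℝ u y := by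
      rw [h1.fderiv]; module
    rw [gradient, gradient, h2, map_smul]
  · have h' : ¬ DifferentiableAt ℝ (fun z => Real.exp (-u z)) y := by
      intro hd
      apply h
      have : DifferentiableAt ℝ (fun z => -Real.log (Real.exp (-u z))) y := by
        exact (hd.log (Real.exp_ne_zero _)).neg
      simpa [Real.log_exp] using this
    rw [gradient_eq_zero_of_not_differentiableAt h,
      gradient_eq_zero_of_not_differentiableAt h', smul_zero]

/-- The w-vector field is the negative of the u-vector field. -/
lemma field_neg (u : EuclideanSpace ℝ (Fin n) → ℝ) (w : EuclideanSpace ℝ (Fin n) → ℝ)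
    (hw : ∀ y, w y = Real.exp (-u y)) (y : EuclideanSpace ℝ (Fin n)) :
    (Real.sqrt (w y ^ 2 + ‖gradient w y‖ ^ 2))⁻¹ • gradient w y
      = -((Real.sqrt (1 + ‖gradient u y‖ ^ 2))⁻¹ • gradient u y) := by
  have hwf : w = fun z => Real.exp (-u z) := funext hw
  subst hwf
  have hpos : (0:ℝ) < Real.exp (-u y) := Real.exp_pos _
  rw [grad_exp_neg u y]
  have hnorm : ‖(-Real.exp (-u y)) • gradient u y‖ = Real.exp (-u y) * ‖gradient u y‖ := by
    rw [norm_smul]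
    simp [abs_of_pos hpos]
  rw [hnorm]
  have hsq : Real.exp (-u y) ^ 2 + (Real.exp (-u y) * ‖gradient u y‖) ^ 2
      = Real.exp (-u y) ^ 2 * (1 + ‖gradient u y‖ ^ 2) := by ring
  rw [hsq, Real.sqrt_mul (by positivity), Real.sqrt_sq hpos.le]
  rw [smul_smul, ← neg_smul]
  congr 1
  have hs : (0:ℝ) < Real.sqrt (1 + ‖gradient u y‖ ^ 2) := by
    apply Real.sqrt_pos.2; positivity
  field_simp

end aux

/-- for `u ∈ C²(B)` and `w = e^{-u}`, the equation
`div(Dw/√(w²+|Dw|²)) = w/√(w²+|Dw|²) + ln w` holds at a point `x ∈ B` iff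
`div(Du/√(1+|Du|²)) = -1/√(1+|Du|²) + u` holds at `x`. -/
theorem stmt_15 (n : ℕ) (B : Set (EuclideanSpace ℝ (Fin n))) (hB : IsOpen B)
    (u w : EuclideanSpace ℝ (Fin n) → ℝ) (hu : ContDiffOn ℝ 2 u B)
    (hw : ∀ y, w y = Real.exp (-u y)) :
    ∀ x ∈ B,
      (vdiv n (fun y => (Real.sqrt (w y ^ 2 + ‖gradient w y‖ ^ 2))⁻¹ • gradient w y) x
          = w x / Real.sqrt (w x ^ 2 + ‖gradient w x‖ ^ 2) + Real.log (w x)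
        ↔
       meanCurv n u x = -(Real.sqrt (1 + ‖gradient u x‖ ^ 2))⁻¹ + u x) := by
  intro x hx
  -- The LHS divergence is the negative of meanCurv.
  have hfield : (fun y => (Real.sqrt (w y ^ 2 + ‖gradient w y‖ ^ 2))⁻¹ • gradient w y)
      = fun y => -((Real.sqrt (1 + ‖gradient u y‖ ^ 2))⁻¹ • gradient u y) :=
    funext (field_neg u w hw)
  have hdiv : vdiv n (fun y => (Real.sqrt (w y ^ 2 + ‖gradient w y‖ ^ 2))⁻¹ • gradient w y) x
      = -meanCurv n u x := by
    rw [hfield]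
    unfold meanCurv vdiv
    rw [fderiv_fun_neg]
    simp
  -- Compute the RHS terms at x.
  have hpos : (0:ℝ) < w x := by rw [hw x]; exact Real.exp_pos _
  have hgw : gradient w x = (-(w x)) • gradient u x := by
    have := grad_exp_neg u x
    have hwf : w = fun z => Real.exp (-u z) := funext hw
    rw [hwf]; simpa using this
  have hnorm : ‖gradient w x‖ = w x * ‖gradient u x‖ := by
    rw [hgw, norm_smul]
    simp [abs_of_pos hpos]
  have hsqrt : Real.sqrt (w x ^ 2 + ‖gradient w x‖ ^ 2)
      = w x * Real.sqrt (1 + ‖gradient u x‖ ^ 2) := by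
    rw [hnorm]
    have : w x ^ 2 + (w x * ‖gradient u x‖) ^ 2 = w x ^ 2 * (1 + ‖gradient u x‖ ^ 2) := by ring
    rw [this, Real.sqrt_mul (by positivity), Real.sqrt_sq hpos.le]
  have hsq1 : (0:ℝ) < Real.sqrt (1 + ‖gradient u x‖ ^ 2) := by
    apply Real.sqrt_pos.2; positivity
  have hrhs1 : w x / Real.sqrt (w x ^ 2 + ‖gradient w x‖ ^ 2)
      = (Real.sqrt (1 + ‖gradient u x‖ ^ 2))⁻¹ := by
    rw [hsqrt]
    field_simp
  have hlog : Real.log (w x) = -u x := by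
    rw [hw x, Real.log_exp]
  rw [hdiv, hrhs1, hlog]
  constructor <;> intro h <;> linarith
end
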